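/- Let A be the diagonal matrix with distinct eigenvalues λ₁, …, λ_m of multiplicities σ₁, …, σ_m as in the block structure, let D be a real symmetric N×N matrix, and assume the Kalman rank condition rank(D, AD, …, A^{N−1}D) = N holds. Then there exists a constant c > 0 such that for every U ∈ ℝ^N, c‖U‖² ≤ ‖DU‖² − Σ_{k≠l} ⟨D_l U_l, D_k U_k⟩, where the sum ranges over all ordered pairs (k, l) with 1 ≤ k, l ≤ m and k ≠ l, ‖·‖ is the Euclidean norm and ⟨·,·⟩ the Euclidean inner product on ℝ^N. -/

import Mathlib

/-- The Kalman matrix `(D, AD, A²D, …, A^{M−1}D)` of a pair of square matrices,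
viewed as a matrix indexed by `n × (Fin M × n)` whose `(i, (k, j))` entry is
`(A^k * D) i j`. -/
def kalmanMatrix {n : Type*} [Fintype n] [DecidableEq n] (M : ℕ)
    (A D : Matrix n n ℝ) : Matrix n (Fin M × n) ℝ :=
  fun i p => (A ^ (p.1 : ℕ) * D) i p.2

/-- `blockStart σ l = μ_{l-1} = σ₁ + ⋯ + σ_{l-1}`, the index at which block `l` begins
(0-based); block `l` consists of the indices `i` with `blockStart σ l ≤ i < blockStart σ l + σ l`. -/
def blockStart {m : ℕ} (σ : Fin m → ℕ) (l : Fin m) : ℕ :=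
  ∑ k ∈ Finset.Iio l, σ k

/-- `D_l U_l = Σ_{i ∈ block l} u^(i) d_i ∈ ℝ^N`, the contribution of block `l` to `DU`. -/
def blockPart {N m : ℕ} (σ : Fin m → ℕ) (D : Matrix (Fin N) (Fin N) ℝ)
    (U : Fin N → ℝ) (l : Fin m) : Fin N → ℝ :=
  fun r => ∑ i : Fin N,
    if blockStart σ l ≤ (i : ℕ) ∧ (i : ℕ) < blockStart σ l + σ l then U i * D r i else 0

lemma sum_Iic_eq {m : ℕ} (σ : Fin m → ℕ) (l : Fin m) :
    ∑ k ∈ Finset.Iic l, σ k = blockStart σ l + σ l := by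
  rw [← Finset.Iio_insert, Finset.sum_insert (by simp), blockStart, add_comm]

lemma blockStart_add_le {m : ℕ} (σ : Fin m → ℕ) {k l : Fin m} (h : k < l) :
    blockStart σ k + σ k ≤ blockStart σ l := by
  rw [← sum_Iic_eq]
  exact Finset.sum_le_sum_of_subset (by
    intro j hj
    simp only [Finset.mem_Iic] at hj
    simp only [Finset.mem_Iio]
    exact lt_of_le_of_lt hj h)

lemma block_existsUnique {N m : ℕ} (σ : Fin m → ℕ) (hsum : ∑ l, σ l = N) (i : Fin N) :
    ∃! l : Fin m, blockStart σ l ≤ (i : ℕ) ∧ (i : ℕ) < blockStart σ l + σ l := by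
  have hm : 0 < m := by
    rcases Nat.eq_zero_or_pos m with h | h
    · subst h
      simp only [Finset.univ_eq_empty, Finset.sum_empty] at hsum
      exact absurd i.isLt (by omega)
    · exact h
  have h0 : blockStart σ ⟨0, hm⟩ = 0 := by
    apply Finset.sum_eq_zero
    intro k hk
    simp only [Finset.mem_Iio] at hk
    exact absurd hk (by simp [Fin.lt_def])
  set S : Finset (Fin m) := Finset.univ.filter (fun l => blockStart σ l ≤ (i : ℕ)) with hS
  have hSne : S.Nonempty := ⟨⟨0, hm⟩, by simp [hS, h0]⟩
  set l₀ := S.max' hSne with hl₀def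
  have hl₀S : l₀ ∈ S := S.max'_mem hSne
  have hl₀le : blockStart σ l₀ ≤ (i : ℕ) := (Finset.mem_filter.mp hl₀S).2
  have hmax : ∀ k ∈ S, k ≤ l₀ := fun k hk => S.le_max' k hk
  have hlt : (i : ℕ) < blockStart σ l₀ + σ l₀ := by
    by_contra hcon
    push_neg at hcon
    by_cases h1 : (l₀ : ℕ) + 1 < m
    · set k : Fin m := ⟨(l₀ : ℕ) + 1, h1⟩ with hk
      have hsub : Finset.Iio k ⊆ Finset.Iic l₀ := by
        intro j hj
        simp only [Finset.mem_Iio] at hj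
        simp only [Finset.mem_Iic]
        have : (j : ℕ) < (l₀ : ℕ) + 1 := hj
        exact Fin.le_def.mpr (by omega)
      have hle : blockStart σ k ≤ blockStart σ l₀ + σ l₀ := by
        rw [← sum_Iic_eq]
        exact Finset.sum_le_sum_of_subset hsub
      have hkS : k ∈ S := by
        simp only [hS, Finset.mem_filter]
        exact ⟨Finset.mem_univ _, le_trans hle hcon⟩
      have h2 : (k : ℕ) ≤ (l₀ : ℕ) := hmax k hkS
      simp [hk] at h2
    · have heq : Finset.Iic l₀ = Finset.univ := by
        apply Finset.eq_univ_iff_forall.mpr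
        intro j
        simp only [Finset.mem_Iic]
        exact Fin.le_def.mpr (by omega)
      have : (N : ℕ) ≤ (i : ℕ) := by
        calc N = ∑ l, σ l := hsum.symm
        _ = ∑ k ∈ Finset.Iic l₀, σ k := by rw [heq]
        _ = blockStart σ l₀ + σ l₀ := sum_Iic_eq σ l₀
        _ ≤ (i : ℕ) := hcon
      exact absurd i.isLt (by omega)
  refine ⟨l₀, ⟨hl₀le, hlt⟩, ?_⟩
  intro k hk
  by_contra hne
  rcases lt_or_gt_of_ne hne with h | h
  · have := blockStart_add_le σ h
    omega
  · have := blockStart_add_le σ h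
    omega

theorem stmt4 (N m : ℕ) (lam : Fin m → ℝ) (σ : Fin m → ℕ)
    (hlam : Function.Injective lam) (hσ : ∀ l, 0 < σ l)
    (hsum : ∑ l, σ l = N)
    (A D : Matrix (Fin N) (Fin N) ℝ) (hD : D.IsSymm)
    (hAoff : ∀ i j : Fin N, i ≠ j → A i j = 0)
    (hAdiag : ∀ (l : Fin m) (i : Fin N),
      blockStart σ l ≤ (i : ℕ) → (i : ℕ) < blockStart σ l + σ l → A i i = lam l)
    (hK : (kalmanMatrix N A D).rank = N) :
    ∃ c : ℝ, 0 < c ∧ ∀ U : Fin N → ℝ,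
      c * (∑ i, U i ^ 2) ≤
        (∑ r, D.mulVec U r ^ 2) -
          ∑ k : Fin m, ∑ l : Fin m,
            if k ≠ l then ∑ r, blockPart σ D U l r * blockPart σ D U k r else 0 := by
  classical
  -- the unique block containing each index
  obtain ⟨φ, hφ, hφu⟩ : ∃ φ : Fin N → Fin m,
      (∀ i, blockStart σ (φ i) ≤ (i : ℕ) ∧ (i : ℕ) < blockStart σ (φ i) + σ (φ i)) ∧
      (∀ (i : Fin N) (l : Fin m),
        (blockStart σ l ≤ (i : ℕ) ∧ (i : ℕ) < blockStart σ l + σ l) → l = φ i) := by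
    choose φ h1 h2 using fun i => block_existsUnique σ hsum i
    exact ⟨φ, h1, fun i l hl => h2 i l hl⟩
  have hsingle : ∀ (i : Fin N) (c : Fin m → ℝ),
      (∑ l, if blockStart σ l ≤ (i : ℕ) ∧ (i : ℕ) < blockStart σ l + σ l then c l else 0)
        = c (φ i) := by
    intro i c
    rw [Finset.sum_eq_single (φ i)]
    · exact if_pos (hφ i)
    · intro l _ hne
      exact if_neg (fun hP => hne (hφu i l hP))
    · intro h
      exact absurd (Finset.mem_univ _) h
  -- mulVec decomposes into block parts
  have hmv : ∀ (U : Fin N → ℝ) (r : Fin N), D.mulVec U r = ∑ l, blockPart σ D U l r := by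
    intro U r
    unfold blockPart
    rw [Finset.sum_comm]
    simp only [Matrix.mulVec, dotProduct]
    refine Finset.sum_congr rfl fun i _ => ?_
    rw [hsingle i (fun _ => U i * D r i)]
    ring
  -- the right-hand side equals the sum of squares of block parts
  have hsplit : ∀ U : Fin N → ℝ,
      (∑ r, D.mulVec U r ^ 2) -
          (∑ k : Fin m, ∑ l : Fin m,
            if k ≠ l then ∑ r, blockPart σ D U l r * blockPart σ D U k r else 0)
        = ∑ l, ∑ r, blockPart σ D U l r ^ 2 := by
    intro U
    set b := blockPart σ D U with hb
    have e1 : (∑ r, D.mulVec U r ^ 2) = ∑ k, ∑ l, ∑ r, b l r * b k r := by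
      calc (∑ r, D.mulVec U r ^ 2) = ∑ r, ∑ k, ∑ l, b k r * b l r := by
            refine Finset.sum_congr rfl fun r _ => ?_
            rw [hmv U r, sq, Finset.sum_mul_sum]
        _ = ∑ k, ∑ r, ∑ l, b k r * b l r := Finset.sum_comm
        _ = ∑ k, ∑ l, ∑ r, b l r * b k r := by
            refine Finset.sum_congr rfl fun k _ => ?_
            rw [Finset.sum_comm]
            exact Finset.sum_congr rfl fun l _ =>
              Finset.sum_congr rfl fun r _ => mul_comm _ _
    have e2 : ∀ k l : Fin m, (∑ r, b l r * b k r) =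
        (if k ≠ l then ∑ r, b l r * b k r else 0)
          + (if k = l then ∑ r, b l r * b k r else 0) := by
      intro k l
      by_cases h : k = l <;> simp [h]
    rw [e1]
    have e3k : ∀ k : Fin m, (∑ l, ∑ r, b l r * b k r) =
        (∑ l : Fin m, if k ≠ l then ∑ r, b l r * b k r else 0) + ∑ r, b k r * b k r := by
      intro k
      rw [Finset.sum_congr rfl fun l _ => e2 k l, Finset.sum_add_distrib]
      congr 1
      rw [Finset.sum_ite_eq]
      simp
    have e3 : ∑ k, ∑ l, ∑ r, b l r * b k r =
        (∑ k : Fin m, ∑ l : Fin m,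
            if k ≠ l then ∑ r, b l r * b k r else 0)
          + ∑ k, ∑ r, b k r * b k r := by
      rw [Finset.sum_congr rfl fun k _ => e3k k, Finset.sum_add_distrib]
    rw [e3, add_sub_cancel_left]
    exact Finset.sum_congr rfl fun k _ =>
      Finset.sum_congr rfl fun r _ => (pow_two (b k r)).symm ▸ rfl
  -- the linear map whose squared norm is the RHS
  let T : EuclideanSpace ℝ (Fin N) →ₗ[ℝ] EuclideanSpace ℝ (Fin m × Fin N) :=
    { toFun := fun U => WithLp.toLp 2 (fun p => blockPart σ D U p.1 p.2)
      map_add' := by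
        intro U V
        ext p
        show blockPart σ D (U + V) p.1 p.2 = blockPart σ D U p.1 p.2 + blockPart σ D V p.1 p.2
        unfold blockPart
        rw [← Finset.sum_add_distrib]
        refine Finset.sum_congr rfl fun i _ => ?_
        have h : (U.ofLp + V.ofLp) i = U i + V i := rfl
        rw [h]
        split_ifs <;> ring
      map_smul' := by
        intro c U
        ext p
        show blockPart σ D (c • U) p.1 p.2 = c * blockPart σ D U p.1 p.2
        unfold blockPart
        rw [Finset.mul_sum]
        refine Finset.sum_congr rfl fun i _ => ?_
        have h : (c • U.ofLp) i = c * U i := rfl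
        rw [h]
        split_ifs <;> ring }
  have hTapp : ∀ (U : Fin N → ℝ) (p : Fin m × Fin N), T (WithLp.toLp 2 U) p = blockPart σ D U p.1 p.2 :=
    fun _ _ => rfl
  -- injectivity via the Kalman rank condition
  have hAd : A = Matrix.diagonal (fun i => A i i) := by
    ext i j
    by_cases h : i = j
    · subst h; simp
    · simp [Matrix.diagonal, h, hAoff i j h]
  have hker : LinearMap.ker T = ⊥ := by
    rw [LinearMap.ker_eq_bot']
    intro U hU
    obtain ⟨U⟩ := U
    have hbz : ∀ l r, blockPart σ D U l r = 0 := by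
      intro l r
      have h : T (WithLp.toLp 2 U) (l, r) = (0 : EuclideanSpace ℝ (Fin m × Fin N)) (l, r) := by rw [hU]
      rw [hTapp U (l, r)] at h
      simpa using h
    have hK0 : Matrix.vecMul U (kalmanMatrix N A D) = 0 := by
      funext p
      obtain ⟨k, j⟩ := p
      show (∑ i, U i * kalmanMatrix N A D i (k, j)) = 0
      have hent : ∀ i : Fin N, kalmanMatrix N A D i (k, j) = (A i i) ^ (k : ℕ) * D i j := by
        intro i
        rw [kalmanMatrix]
        conv_lhs => rw [hAd]
        rw [Matrix.diagonal_pow, Matrix.diagonal_mul]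
        rfl
      calc (∑ i, U i * kalmanMatrix N A D i (k, j))
          = ∑ i : Fin N, ∑ l, (if blockStart σ l ≤ (i : ℕ) ∧ (i : ℕ) < blockStart σ l + σ l
              then lam l ^ (k : ℕ) * (U i * D j i) else 0) := by
            refine Finset.sum_congr rfl fun i _ => ?_
            rw [hsingle i (fun l => lam l ^ (k : ℕ) * (U i * D j i)),
              hent i, ← hAdiag (φ i) i (hφ i).1 (hφ i).2, hD.apply]
            ring
        _ = ∑ l, lam l ^ (k : ℕ) * blockPart σ D U l j := by
            rw [Finset.sum_comm]
            refine Finset.sum_congr rfl fun l _ => ?_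
            unfold blockPart
            rw [Finset.mul_sum]
            refine Finset.sum_congr rfl fun i _ => ?_
            split_ifs <;> ring
        _ = 0 := by simp [hbz]
    have hrange : LinearMap.range (kalmanMatrix N A D).mulVecLin = ⊤ := by
      apply Submodule.eq_top_of_finrank_eq
      rw [Module.finrank_fintype_fun_eq_card, Fintype.card_fin]
      exact hK
    obtain ⟨v, hv⟩ := LinearMap.range_eq_top.mp hrange U
    have hdot : dotProduct U U = 0 := by
      calc dotProduct U U = dotProduct U ((kalmanMatrix N A D).mulVec v) := by
            rw [← Matrix.mulVecLin_apply, hv]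
        _ = dotProduct (Matrix.vecMul U (kalmanMatrix N A D)) v :=
            Matrix.dotProduct_mulVec _ _ _
        _ = 0 := by rw [hK0]; simp [dotProduct]
    have hz : ∀ i, U i = 0 := by
      have := (Finset.sum_eq_zero_iff_of_nonneg
        (fun i _ => mul_self_nonneg (U i))).mp hdot
      intro i
      exact mul_self_eq_zero.mp (this i (Finset.mem_univ i))
    ext i
    exact hz i
  obtain ⟨K, hKpos, hanti⟩ := T.exists_antilipschitzWith hker
  refine ⟨((K : ℝ) ^ 2)⁻¹, by positivity, ?_⟩
  intro U
  set u : EuclideanSpace ℝ (Fin N) := WithLp.toLp 2 U with hu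
  have hnorm : ‖u‖ ≤ (K : ℝ) * ‖T u‖ := by
    have h := hanti.le_mul_dist u 0
    simpa [dist_zero_right, map_zero] using h
  have h1 : (∑ i, U i ^ 2) = ‖u‖ ^ 2 := by
    rw [EuclideanSpace.norm_eq, Real.sq_sqrt (by positivity)]
    exact Finset.sum_congr rfl fun i _ => by rw [Real.norm_eq_abs, sq_abs]
  have h2 : ‖T u‖ ^ 2 = ∑ l, ∑ r, blockPart σ D U l r ^ 2 := by
    rw [EuclideanSpace.norm_eq, Real.sq_sqrt (by positivity), Fintype.sum_prod_type]
    refine Finset.sum_congr rfl fun l _ => Finset.sum_congr rfl fun r _ => ?_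
    rw [Real.norm_eq_abs, sq_abs]
    exact congrArg (· ^ 2) (hTapp U (l, r))
  rw [hsplit U, h1, ← h2]
  rw [inv_mul_le_iff₀ (by positivity)]
  nlinarith [norm_nonneg (T u), norm_nonneg u]
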